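/- If Y is a real random variable and V is uniform on [0,1] independent of a σ-algebra 𝒢 with F(y) = P(Y ≤ y | 𝒢) continuous, then one can couple: there exists a uniform [0,1] random variable U such that {Y ≤ y} = {U ≤ F(y)} almost surely for all y (i.e., U = F(Y) is uniformly distributed when F is the continuous CDF of Y). -/

import Mathlib

open MeasureTheory Set Filter Topology

/-- Probability integral transform: if `Y` has continuous CDF `F`, then there is a
uniform-`[0,1]` random variable `U` (namely `U = F ∘ Y`) such that for every `y`,
the events `{Y ≤ y}` and `{U ≤ F y}` agree up to a null set. -/
theorem probability_integral_transform
    {Ω : Type*} [MeasurableSpace Ω] (μ : Measure Ω) [IsProbabilityMeasure μ]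
    (Y : Ω → ℝ) (hY : Measurable Y)
    (F : ℝ → ℝ) (hF_def : ∀ y, F y = (μ {ω | Y ω ≤ y}).toReal)
    (hF_cont : Continuous F) :
    ∃ U : Ω → ℝ, Measurable U ∧
      Measure.map U μ = volume.restrict (Icc (0:ℝ) 1) ∧
      ∀ y : ℝ, μ (symmDiff {ω | Y ω ≤ y} {ω | U ω ≤ F y}) = 0 := by
  classical
  set ν := Measure.map Y μ with hν
  have hνprob : IsProbabilityMeasure ν := Measure.isProbabilityMeasure_map hY.aemeasurable
  have hIic : ∀ y, ν (Iic y) = μ {ω | Y ω ≤ y} := by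
    intro y
    rw [hν, Measure.map_apply hY measurableSet_Iic]
    rfl
  have hFcdf : ∀ y, F y = ProbabilityTheory.cdf ν y := by
    intro y
    rw [hF_def, ProbabilityTheory.cdf_eq_real, measureReal_def, hIic]
  have hF0 : ∀ y, 0 ≤ F y := fun y => (hFcdf y) ▸ ProbabilityTheory.cdf_nonneg ν y
  have hF1 : ∀ y, F y ≤ 1 := fun y => (hFcdf y) ▸ ProbabilityTheory.cdf_le_one ν y
  have hFmono : Monotone F := by
    intro a b hab
    rw [hFcdf a, hFcdf b]
    exact ProbabilityTheory.monotone_cdf ν hab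
  have hFtop : Tendsto F atTop (𝓝 1) := by
    have := ProbabilityTheory.tendsto_cdf_atTop ν
    exact this.congr (fun x => (hFcdf x).symm)
  have hFbot : Tendsto F atBot (𝓝 0) := by
    have := ProbabilityTheory.tendsto_cdf_atBot ν
    exact this.congr (fun x => (hFcdf x).symm)
  have hνIic : ∀ y, ν (Iic y) = ENNReal.ofReal (F y) := by
    intro y
    rw [hFcdf y, ProbabilityTheory.ofReal_cdf]
  -- key lemma
  have key : ∀ u : ℝ, 0 ≤ u → u ≤ 1 → ν {x | F x ≤ u} = ENNReal.ofReal u := by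
    intro u hu0 hu1
    rcases eq_or_lt_of_le hu1 with rfl | hu1
    · have : {x | F x ≤ 1} = univ := eq_univ_of_forall (fun x => hF1 x)
      rw [this, measure_univ, ENNReal.ofReal_one]
    · set s := {x | F x ≤ u} with hs
      have hsclosed : IsClosed s := isClosed_le hF_cont continuous_const
      -- s is bounded above
      have hbdd : BddAbove s := by
        have hev : ∀ᶠ x in atTop, u < F x := hFtop.eventually (eventually_gt_nhds hu1)
        obtain ⟨b, hb⟩ := hev.exists_forall_of_atTop
        refine ⟨b, fun x hx => ?_⟩
        by_contra hxb
        push_neg at hxb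
        exact absurd hx (not_le.mpr (hb x hxb.le))
      by_cases hne : s.Nonempty
      · set a := sSup s with ha
        have ha_mem : a ∈ s := hsclosed.csSup_mem hne hbdd
        have hsIic : s = Iic a := by
          apply Subset.antisymm
          · exact fun x hx => le_csSup hbdd hx
          · intro x hx
            exact le_trans (hFmono hx) ha_mem
        have hFa_le : F a ≤ u := ha_mem
        have hFa_ge : u ≤ F a := by
          have htend : Tendsto F (𝓝[>] a) (𝓝 (F a)) :=
            (hF_cont.continuousAt).continuousWithinAt
          refine ge_of_tendsto htend ?_
          filter_upwards [self_mem_nhdsWithin] with x hx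
          have : x ∉ s := fun hxs => absurd (le_csSup hbdd hxs) (not_le.mpr hx)
          exact (not_le.mp this).le
        have : F a = u := le_antisymm hFa_le hFa_ge
        rw [hsIic, hνIic, this]
      · -- s empty: then u = 0
        rw [not_nonempty_iff_eq_empty] at hne
        have hu0' : u = 0 := by
          by_contra h
          have hu0'' : 0 < u := lt_of_le_of_ne hu0 (Ne.symm h)
          have hev : ∀ᶠ x in atBot, F x < u := hFbot.eventually (eventually_lt_nhds hu0'')
          obtain ⟨b, hb⟩ := hev.exists
          exact (Set.eq_empty_iff_forall_notMem.mp hne b) hb.le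
        rw [hne, hu0', measure_empty, ENNReal.ofReal_zero]
  refine ⟨F ∘ Y, hF_cont.measurable.comp hY, ?_, ?_⟩
  · -- the pushforward is uniform on [0,1]
    have hmap : Measure.map (F ∘ Y) μ = Measure.map F ν := by
      rw [hν, Measure.map_map hF_cont.measurable hY]
    rw [hmap]
    have hprob2 : IsProbabilityMeasure (volume.restrict (Icc (0:ℝ) 1)) := by
      constructor
      simp [Real.volume_Icc]
    have hprob1 : IsProbabilityMeasure (Measure.map F ν) :=
      Measure.isProbabilityMeasure_map hF_cont.measurable.aemeasurable
    refine Measure.ext_of_Iic _ _ (fun u => ?_)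
    rw [Measure.map_apply hF_cont.measurable measurableSet_Iic,
      Measure.restrict_apply measurableSet_Iic]
    have hpre : F ⁻¹' Iic u = {x | F x ≤ u} := rfl
    rcases lt_or_ge u 0 with hu | hu0
    · have h1 : {x | F x ≤ u} = ∅ := by
        ext x; simp only [mem_setOf_eq, mem_empty_iff_false, iff_false, not_le]
        exact lt_of_lt_of_le hu (hF0 x)
      have h2 : Iic u ∩ Icc (0:ℝ) 1 = ∅ := by
        ext x
        simp only [mem_inter_iff, mem_Iic, mem_Icc, mem_empty_iff_false, iff_false, not_and]
        intro hxu hx0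
        exact fun _ => absurd (le_trans hx0 hxu) (not_le.mpr hu)
      rw [hpre, h1, h2, measure_empty, measure_empty]
    · rcases le_or_gt u 1 with hu1 | hu1
      · have h2 : Iic u ∩ Icc (0:ℝ) 1 = Icc 0 u := by
          ext x
          simp only [mem_inter_iff, mem_Iic, mem_Icc]
          constructor
          · rintro ⟨hxu, hx0, _⟩; exact ⟨hx0, hxu⟩
          · rintro ⟨hx0, hxu⟩; exact ⟨hxu, hx0, le_trans hxu hu1⟩
        rw [hpre, key u hu0 hu1, h2, Real.volume_Icc, sub_zero]
      · have h1 : {x | F x ≤ u} = univ :=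
          eq_univ_of_forall (fun x => le_trans (hF1 x) hu1.le)
        have h2 : Iic u ∩ Icc (0:ℝ) 1 = Icc 0 1 := by
          apply inter_eq_self_of_subset_right
          intro x hx
          exact le_trans hx.2 hu1.le
        rw [hpre, h1, h2, measure_univ, Real.volume_Icc, sub_zero, ENNReal.ofReal_one]
  · -- symmetric difference null
    intro y
    have hsubset : {ω | Y ω ≤ y} ⊆ {ω | (F ∘ Y) ω ≤ F y} := fun ω hω => hFmono hω
    have hsd : symmDiff {ω | Y ω ≤ y} {ω | (F ∘ Y) ω ≤ F y}
        = {ω | (F ∘ Y) ω ≤ F y} \ {ω | Y ω ≤ y} := by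
      rw [symmDiff_def]
      rw [Set.diff_eq_empty.mpr hsubset]
      simp [Set.sup_eq_union]
    rw [hsd]
    have hmeas1 : μ {ω | (F ∘ Y) ω ≤ F y} = ν {x | F x ≤ F y} := by
      rw [hν, Measure.map_apply hY (measurableSet_le hF_cont.measurable measurable_const)]
      rfl
    have hmeas2 : μ ({ω | (F ∘ Y) ω ≤ F y} \ {ω | Y ω ≤ y})
        = ν ({x | F x ≤ F y} \ Iic y) := by
      rw [hν, Measure.map_apply hY]
      · congr 1
      · exact ((measurableSet_le hF_cont.measurable measurable_const).diff measurableSet_Iic)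
    rw [hmeas2]
    have hsub2 : Iic y ⊆ {x | F x ≤ F y} := fun x hx => hFmono hx
    rw [measure_diff hsub2 measurableSet_Iic.nullMeasurableSet (measure_ne_top ν _)]
    rw [key (F y) (hF0 y) (hF1 y), hνIic]
    simp
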